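/- Let Γ be admissible, ν ∈ P(S), and μ ∈ P(S) with μ ≪ ν. If μ itself belongs to the class A(S) (i.e., dμ/dν = e^g on supp(ν) for some g ∈ Γ), then G_Γ(μ‖ν) = R(μ‖ν). -/
import Mathlib

open MeasureTheory BoundedContinuousFunction Real

/-- The weak topology on `C_b(S)` induced by integration against finite measures
(equivalently, finite signed measures). -/
noncomputable def weakTopology (S : Type*) [TopologicalSpace S] [MeasurableSpace S] :
    TopologicalSpace (S →ᵇ ℝ) :=
  ⨅ μ : {μ : Measure S // IsFiniteMeasure μ},
    TopologicalSpace.induced (fun f : S →ᵇ ℝ => ∫ x, f x ∂μ.1) inferInstance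

/-- A set `Γ ⊂ C_b(S)` is admissible if it is convex, closed in the weak topology,
symmetric, contains all constants, and is measure-determining for `P(S)`. -/
def Admissible {S : Type*} [TopologicalSpace S] [MeasurableSpace S]
    (Γ : Set (S →ᵇ ℝ)) : Prop :=
  Convex ℝ Γ ∧ @IsClosed _ (weakTopology S) Γ ∧ (∀ g ∈ Γ, -g ∈ Γ) ∧
    (∀ r : ℝ, BoundedContinuousFunction.const S r ∈ Γ) ∧
    ∀ μ ν : Measure S, IsProbabilityMeasure μ → IsProbabilityMeasure ν → μ ≠ ν →
      ∃ g ∈ Γ, ∫ x, g x ∂μ ≠ ∫ x, g x ∂ν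

/-- The `Γ`-divergence `G_Γ(μ‖ν) = sup_{g ∈ Γ} { ∫ g dμ − log ∫ e^g dν }`. -/
noncomputable def gDiv {S : Type*} [TopologicalSpace S] [MeasurableSpace S]
    (Γ : Set (S →ᵇ ℝ)) (μ ν : Measure S) : EReal :=
  ⨆ g ∈ Γ, (((∫ x, g x ∂μ) - Real.log (∫ x, Real.exp (g x) ∂ν) : ℝ) : EReal)

/-- The topological support of a measure. -/
def measSupport {S : Type*} [TopologicalSpace S] [MeasurableSpace S] (ν : Measure S) : Set S :=
  {x : S | ∀ U : Set S, IsOpen U → x ∈ U → ν U ≠ 0}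

/-- Relative entropy via its Donsker–Varadhan representation over bounded measurable functions. -/
noncomputable def klSup {S : Type*} [MeasurableSpace S] (μ ν : Measure S) : EReal :=
  ⨆ (g : S → ℝ) (_ : Measurable g ∧ ∃ C, ∀ x, |g x| ≤ C),
    (((∫ x, g x ∂μ) - Real.log (∫ x, Real.exp (g x) ∂ν) : ℝ) : EReal)

/-- In a second-countable space, almost every point lies in the support of a measure. -/
lemma ae_mem_measSupport {S : Type*} [TopologicalSpace S] [MeasurableSpace S]
    [SecondCountableTopology S] (ν : Measure S) :
    ∀ᵐ x ∂ν, x ∈ measSupport ν := by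
  obtain ⟨T, hTc, hTsub, hTeq⟩ :=
    TopologicalSpace.isOpen_sUnion_countable {u : Set S | IsOpen u ∧ ν u = 0}
      (fun u hu => hu.1)
  rw [MeasureTheory.ae_iff]
  refine measure_mono_null (fun x hx => ?_) ((measure_sUnion_null_iff hTc).2
    (fun u hu => (hTsub hu).2))
  simp only [Set.mem_setOf_eq, measSupport] at hx
  push_neg at hx
  obtain ⟨U, hUo, hxU, hU⟩ := hx
  rw [hTeq]
  exact ⟨U, ⟨hUo, hU⟩, hxU⟩

/-- If `μ ≪ ν` and `dμ/dν = e^g` on `supp(ν)` for some `g ∈ Γ`, then `G_Γ(μ‖ν) = R(μ‖ν)`. -/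
theorem gDiv_eq_klSup_of_mem_classA
    {S : Type*} [TopologicalSpace S] [PolishSpace S] [MeasurableSpace S] [BorelSpace S]
    (Γ : Set (S →ᵇ ℝ)) (hΓ : Admissible Γ)
    (μ ν : Measure S) [IsProbabilityMeasure μ] [IsProbabilityMeasure ν] (hac : μ ≪ ν)
    (hA : ∃ g ∈ Γ, ∀ x ∈ measSupport ν, μ.rnDeriv ν x = ENNReal.ofReal (Real.exp (g x))) :
    gDiv Γ μ ν = klSup μ ν := by
  obtain ⟨g, hgΓ, hg⟩ := hA
  -- the Radon–Nikodym derivative equals `exp (g x)` ν-a.e.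
  have hrn : ∀ᵐ x ∂ν, μ.rnDeriv ν x = ENNReal.ofReal (Real.exp (g x)) :=
    (ae_mem_measSupport ν).mono fun x hx => hg x hx
  have hrn' : ∀ᵐ x ∂ν, (μ.rnDeriv ν x).toReal = Real.exp (g x) :=
    hrn.mono fun x hx => by rw [hx, ENNReal.toReal_ofReal (Real.exp_pos _).le]
  -- `∫ e^g dν = 1`
  have hint1 : ∫ x, Real.exp (g x) ∂ν = 1 := by
    rw [← integral_congr_ae hrn', Measure.integral_toReal_rnDeriv hac]
    simp
  have hlog1 : Real.log (∫ x, Real.exp (g x) ∂ν) = 0 := by rw [hint1, Real.log_one]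
  -- key inequality: any bounded measurable `f` gives value at most the value at `g`
  have key : ∀ f : S → ℝ, Measurable f → (∃ C, ∀ x, |f x| ≤ C) →
      (∫ x, f x ∂μ) - Real.log (∫ x, Real.exp (f x) ∂ν)
        ≤ (∫ x, g x ∂μ) - Real.log (∫ x, Real.exp (g x) ∂ν) := by
    intro f hfm hCex
    obtain ⟨C, hC⟩ := hCex
    rw [hlog1, sub_zero]
    -- integrability facts
    have hfint : Integrable f μ :=
      ⟨hfm.aestronglyMeasurable, HasFiniteIntegral.of_bounded (C := C)
        (Filter.Eventually.of_forall fun x => by simpa using hC x)⟩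
    have hgint : Integrable (fun x => g x) μ := g.integrable μ
    have hfg : Integrable (fun x => f x - g x) μ := hfint.sub hgint
    have hexpint : Integrable (fun x => Real.exp (f x - g x)) μ := by
      refine ⟨((hfm.sub g.continuous.measurable).exp).aestronglyMeasurable,
        HasFiniteIntegral.of_bounded (C := Real.exp (C + ‖g‖))
        (Filter.Eventually.of_forall fun x => ?_)⟩
      rw [Real.norm_eq_abs, abs_of_pos (Real.exp_pos _)]
      refine Real.exp_le_exp.2 ?_
      have h1 := hC x
      have h2 : |g x| ≤ ‖g‖ := by simpa using g.norm_coe_le_norm x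
      cases' abs_le.1 h1 with h1a h1b
      cases' abs_le.1 h2 with h2a h2b
      linarith
    -- Jensen's inequality
    have hjen : Real.exp (∫ x, (f x - g x) ∂μ) ≤ ∫ x, Real.exp (f x - g x) ∂μ := by
      have := convexOn_exp.map_integral_le (f := fun x => f x - g x) (μ := μ)
        continuous_exp.continuousOn isClosed_univ
        (Filter.Eventually.of_forall fun x => Set.mem_univ _) hfg hexpint
      simpa using this
    -- change of measure
    have hchg : ∫ x, Real.exp (f x) ∂ν = ∫ x, Real.exp (f x - g x) ∂μ := by
      rw [← integral_rnDeriv_smul hac (f := fun x => Real.exp (f x - g x))]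
      refine integral_congr_ae (hrn'.mono fun x hx => ?_)
      show Real.exp (f x) = (μ.rnDeriv ν x).toReal • Real.exp (f x - g x)
      rw [smul_eq_mul, hx, ← Real.exp_add]
      ring_nf
    have hpos : 0 < ∫ x, Real.exp (f x) ∂ν := by
      rw [hchg]
      exact lt_of_lt_of_le (Real.exp_pos _) hjen
    have hle : ∫ x, (f x - g x) ∂μ ≤ Real.log (∫ x, Real.exp (f x) ∂ν) := by
      rw [← Real.log_exp (∫ x, (f x - g x) ∂μ)]
      exact Real.log_le_log (Real.exp_pos _) (by rw [hchg]; exact hjen)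
    have hsub : ∫ x, (f x - g x) ∂μ = (∫ x, f x ∂μ) - ∫ x, g x ∂μ :=
      integral_sub hfint hgint
    linarith [hle, hsub.symm.le, hsub.le]
  -- now compare the two suprema
  apply le_antisymm
  · refine iSup₂_le fun g' hg' => ?_
    refine le_iSup₂_of_le (fun x => g' x)
      ⟨g'.continuous.measurable, ‖g'‖, fun x => by simpa using g'.norm_coe_le_norm x⟩ ?_
    exact le_rfl
  · refine iSup₂_le fun f hf => ?_
    refine le_iSup₂_of_le g hgΓ ?_
    exact EReal.coe_le_coe_iff.2 (key f hf.1 hf.2)
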